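/- Let G be a split graph with clique C and independent set I, and let \sigma = (v_1, ..., v_n) be an ordering of the vertices satisfying the MNS 3-point condition: whenever a \prec_\sigma b \prec_\sigma c with ac \in E and ab \notin E, there exists d \prec_\sigma b with db \in E and dc \notin E. Then for every pair v_i \in I and v_j \in C with j > i, every clique vertex among v_1, ..., v_{i-1} is a neighbor of v_i. -/
import Mathlib


/-- Lemma 6(1): in an MNS ordering of a split graph, if an independent-set vertex
appears before some clique vertex, then all earlier clique vertices are its neighbors. -/
theorem mns_split_earlier_clique_neighbors {V : Type*} [Fintype V] (G : SimpleGraph V)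
    (C I : Set V)
    (hpart : ∀ x : V, (x ∈ C ∨ x ∈ I) ∧ ¬ (x ∈ C ∧ x ∈ I))
    (hC : G.IsClique C) (hI : ∀ a ∈ I, ∀ b ∈ I, ¬ G.Adj a b)
    (σ : Fin (Fintype.card V) ≃ V)
    (hmns : ∀ a b c : Fin (Fintype.card V), a < b → b < c →
      G.Adj (σ a) (σ c) → ¬ G.Adj (σ a) (σ b) →
      ∃ d, d < b ∧ G.Adj (σ d) (σ b) ∧ ¬ G.Adj (σ d) (σ c)) :
    ∀ i j : Fin (Fintype.card V), i < j → σ i ∈ I → σ j ∈ C →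
      ∀ k, k < i → σ k ∈ C → G.Adj (σ k) (σ i) := by
  intro i j hij hiI hjC k hki hkC
  by_contra hna
  have hkj : G.Adj (σ k) (σ j) := hC hkC hjC (fun h => (hki.trans hij).ne (σ.injective h))
  obtain ⟨d, hdi, hdb, hdc⟩ := hmns k i j (hki) hij hkj hna
  have hdC : σ d ∈ C := by
    rcases (hpart (σ d)).1 with h | h
    · exact h
    · exact absurd hdb (hI _ h _ hiI)
  exact hdc (hC hdC hjC (fun h => (hdi.trans hij).ne (σ.injective h)))
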